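/- Existence of an equilibrium point (Theorem 1, first part). Suppose there exist x*_i ∈ Ω_i (i = 1,…,n) and λ* ∈ ℝ^m satisfying the KKT conditions: ⟨λ* - ∇f_i(x*_i), y - x*_i⟩ ≤ 0 for all y ∈ Ω_i and all i, and ∑_{i=1}^n x*_i = ∑_{i=1}^n d_i. Then, setting λ*_i = λ* for all i and Λ* = (λ*_1,…,λ*_n), there exists Z* = (z*_1,…,z*_n), z*_i ∈ ℝ^m, such that S* = (X*, Λ*, Z*) is an equilibrium point. -/

import Mathlib

open scoped BigOperators RealInnerProductSpace

/-- **Existence of an equilibrium point** (Theorem 1, first part).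
Suppose `x*ᵢ ∈ Ωᵢ` and `λ* ∈ ℝ^m` satisfy the KKT conditions
`⟪λ* - ∇fᵢ(x*ᵢ), y - x*ᵢ⟫ ≤ 0` for all `y ∈ Ωᵢ` and `∑ x*ᵢ = ∑ dᵢ`.  Then, taking
`λ*ᵢ = λ*` for all `i`, there exists `Z* = (z*₁,…,z*ₙ)` such that `(X*, Λ*, Z*)` is an
equilibrium point, i.e. for every `i`: `x*ᵢ ∈ Ωᵢ`, the normal-cone inequality holds,
`∑ⱼ L̄ᵢⱼ (λ* + z*ⱼ) = dᵢ - x*ᵢ`, and `∑ⱼ L̄ᵢⱼ λ* = 0`. -/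
theorem equilibrium_point_exists
    (n m : ℕ) (hn : 0 < n)
    (f : Fin n → EuclideanSpace ℝ (Fin m) → ℝ)
    (hconv : ∀ i, ConvexOn ℝ Set.univ (f i))
    (hdiff : ∀ i, Differentiable ℝ (f i))
    (Ω : Fin n → Set (EuclideanSpace ℝ (Fin m)))
    (hΩne : ∀ i, (Ω i).Nonempty) (hΩcl : ∀ i, IsClosed (Ω i))
    (hΩconv : ∀ i, Convex ℝ (Ω i))
    (d : Fin n → EuclideanSpace ℝ (Fin m))
    (Lbar : Matrix (Fin n) (Fin n) ℝ) (hsym : Lbar.IsSymm)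
    (hker : ∀ x : Fin n → ℝ, Lbar.mulVec x = 0 ↔ ∃ c : ℝ, x = fun _ => c)
    -- the KKT point
    (xs : Fin n → EuclideanSpace ℝ (Fin m)) (lam : EuclideanSpace ℝ (Fin m))
    (hxs_mem : ∀ i, xs i ∈ Ω i)
    (hkkt : ∀ i, ∀ y ∈ Ω i, ⟪lam - gradient (f i) (xs i), y - xs i⟫ ≤ 0)
    (hsum : ∑ i, xs i = ∑ i, d i) :
    ∃ zs : Fin n → EuclideanSpace ℝ (Fin m),
      ∀ i, xs i ∈ Ω i
        ∧ (∀ y ∈ Ω i, ⟪lam - gradient (f i) (xs i), y - xs i⟫ ≤ 0)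
        ∧ (∑ j, Lbar i j • (lam + zs j) = d i - xs i)
        ∧ (∑ j, Lbar i j • lam = 0) := by
  -- row sums of `Lbar` are zero
  have hrow : ∀ i, ∑ j, Lbar i j = 0 := by
    intro i
    have h1 : Lbar.mulVec (fun _ => (1:ℝ)) = 0 := (hker _).mpr ⟨1, rfl⟩
    have := congrFun h1 i
    simpa [Matrix.mulVec, dotProduct] using this
  -- column sums of `Lbar` are zero
  have hcol : ∀ j, ∑ i, Lbar i j = 0 := by
    intro j
    calc ∑ i, Lbar i j = ∑ i, Lbar j i :=
          Finset.sum_congr rfl fun i _ => hsym.apply j i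
      _ = 0 := hrow j
  -- `Lbar.mulVec` is surjective onto vectors with zero sum
  have hsolve : ∀ b : Fin n → ℝ, (∑ i, b i = 0) → ∃ x, Lbar.mulVec x = b := by
    intro b hb
    set T : (Fin n → ℝ) →ₗ[ℝ] (Fin n → ℝ) := Matrix.mulVecLin Lbar with hT
    have hkerT : LinearMap.ker T = Submodule.span ℝ {fun _ => (1:ℝ)} := by
      ext x
      rw [LinearMap.mem_ker, Submodule.mem_span_singleton]
      simp only [hT, Matrix.mulVecLin_apply, hker]
      constructor
      · rintro ⟨c, rfl⟩; exact ⟨c, by funext j; simp⟩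
      · rintro ⟨a, rfl⟩; exact ⟨a, by funext j; simp⟩
    have hone : (fun _ => (1:ℝ) : Fin n → ℝ) ≠ 0 := by
      intro h
      have := congrFun h ⟨0, hn⟩
      simpa using this
    have hdimker : Module.finrank ℝ (LinearMap.ker T) = 1 := by
      rw [hkerT]; exact finrank_span_singleton hone
    set S : (Fin n → ℝ) →ₗ[ℝ] ℝ := ∑ i, LinearMap.proj i with hS
    have hSapp : ∀ x : Fin n → ℝ, S x = ∑ i, x i := by
      intro x; simp [hS, LinearMap.sum_apply]
    have hSsurj : Function.Surjective S := by
      intro c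
      refine ⟨fun j => if j = ⟨0, hn⟩ then c else 0, ?_⟩
      rw [hSapp]; simp
    have hrangeS : LinearMap.range S = ⊤ := LinearMap.range_eq_top.mpr hSsurj
    have hrkS : Module.finrank ℝ (LinearMap.range S) = 1 := by
      rw [hrangeS]; simp
    have hnS := LinearMap.finrank_range_add_finrank_ker S
    have hnT := LinearMap.finrank_range_add_finrank_ker T
    have hdim : Module.finrank ℝ (Fin n → ℝ) = n := by simp
    have hle : LinearMap.range T ≤ LinearMap.ker S := by
      rintro _ ⟨x, rfl⟩
      rw [LinearMap.mem_ker, hSapp]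
      simp only [hT, Matrix.mulVecLin_apply, Matrix.mulVec, dotProduct]
      rw [Finset.sum_comm]
      refine Finset.sum_eq_zero fun j _ => ?_
      rw [← Finset.sum_mul, hcol j, zero_mul]
    have heq : LinearMap.range T = LinearMap.ker S :=
      Submodule.eq_of_le_of_finrank_eq hle (by omega)
    have hbmem : b ∈ LinearMap.ker S := by rw [LinearMap.mem_ker, hSapp]; exact hb
    rw [← heq] at hbmem
    obtain ⟨x, hx⟩ := hbmem
    exact ⟨x, hx⟩
  -- solve each coordinate
  have hsol : ∀ k : Fin m, ∃ z : Fin n → ℝ,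
      Lbar.mulVec z = fun i => d i k - xs i k := by
    intro k
    apply hsolve
    have h1 : (∑ i, xs i) k = (∑ i, d i) k := by rw [hsum]
    have h2 : (∑ i, xs i) k = ∑ i, xs i k := by simp
    have h3 : (∑ i, d i) k = ∑ i, d i k := by simp
    have : ∑ i, d i k - ∑ i, xs i k = 0 := by rw [← h2, ← h3, h1, sub_self]
    rw [← Finset.sum_sub_distrib] at this
    exact this
  choose sol hsol using hsol
  set zs : Fin n → EuclideanSpace ℝ (Fin m) := fun j => WithLp.toLp 2 (fun k => sol k j) with hzs
  refine ⟨zs, fun i => ?_⟩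
  refine ⟨hxs_mem i, hkkt i, ?_, ?_⟩
  · ext k
    have h1 : (∑ j, Lbar i j • (lam + zs j)) k
        = ∑ j, Lbar i j * (lam k + sol k j) :=
      by simp [hzs, mul_add]
    have h2 := congrFun (hsol k) i
    simp only [Matrix.mulVec, dotProduct] at h2
    have : (∑ j, Lbar i j • (lam + zs j)) k
        = d i k - xs i k := by
      rw [h1]
      have : ∑ j, Lbar i j * (lam k + sol k j)
          = (∑ j, Lbar i j) * lam k + ∑ j, Lbar i j * sol k j := by
        rw [Finset.sum_mul, ← Finset.sum_add_distrib]
        exact Finset.sum_congr rfl fun j _ => by ring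
      rw [this, hrow i, zero_mul, zero_add, h2]
    exact this
  · ext k
    have h1 : (∑ j, Lbar i j • lam) k
        = ∑ j, Lbar i j * lam k := by simp
    rw [h1, ← Finset.sum_mul, hrow i, zero_mul]
    rfl
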